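/- As q → ∞, the solution a*(q) ∈ (0,1/2) of the equation 2(1-1/q)a + (1/q)a^{(1-q)/q} - 2 + 1/q = 0 satisfies q·a*(q) → 1/2; consequently δ* = ((a*)^{1/q} + 1 - 2a*)/(1-a*)^{1/q} → 2 and λ* = (1 + (δ*)^{q/(q-1)})^{-(q-1)/q} → 1/3. -/

import Mathlib

open Filter Real

/-- `(2q - c)^(-1/(q-1)) → 1` as `q → ∞`. -/
lemma aux_lim_one (c : ℝ) :
    Tendsto (fun q : ℝ => (2*q - c) ^ (-1/(q-1))) atTop (nhds 1) := by
  have hlin : Tendsto (fun q : ℝ => 2*q - c) atTop atTop := by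
    have := tendsto_atTop_add_const_right atTop (-c)
      (Filter.Tendsto.const_mul_atTop two_pos tendsto_id)
    simpa [sub_eq_add_neg] using this
  have h₁ : Tendsto (fun q : ℝ => log (2*q - c) / (2*q - c)) atTop (nhds 0) :=
    (Real.isLittleO_log_id_atTop.tendsto_div_nhds_zero).comp hlin
  have h₂ : Tendsto (fun q : ℝ => (2*q - c) / (q - 1)) atTop (nhds 2) := by
    have hnum : Tendsto (fun q : ℝ => 2 - c/q) atTop (nhds 2) := by
      simpa using (tendsto_const_nhds (x := (2:ℝ))).sub
        ((tendsto_const_nhds (x := c)).div_atTop tendsto_id)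
    have hden : Tendsto (fun q : ℝ => 1 - 1/q) atTop (nhds 1) := by
      simpa using (tendsto_const_nhds (x := (1:ℝ))).sub
        ((tendsto_const_nhds (x := (1:ℝ))).div_atTop tendsto_id)
    have h := hnum.div hden one_ne_zero
    refine Tendsto.congr' ?_ (by simpa using h)
    filter_upwards [eventually_gt_atTop (1:ℝ)] with q hq
    have hq0 : q ≠ 0 := by positivity
    simp only [Pi.div_apply]
    field_simp
  have hinner : Tendsto (fun q : ℝ => log (2*q - c) * (-1/(q-1))) atTop (nhds 0) := by
    have h := (h₁.mul h₂).neg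
    refine Tendsto.congr' ?_ (by simpa using h)
    filter_upwards [eventually_gt_atTop (1:ℝ), hlin.eventually (eventually_gt_atTop (0:ℝ))]
      with q hq hq2
    have h1 : q - 1 ≠ 0 := by linarith
    have h2 : 2*q - c ≠ 0 := ne_of_gt hq2
    field_simp
  have h := (Real.continuous_exp.tendsto 0).comp hinner
  rw [Real.exp_zero] at h
  refine Tendsto.congr' ?_ h
  filter_upwards [hlin.eventually (eventually_gt_atTop (0:ℝ))] with q hq2
  simp [Function.comp, Real.rpow_def_of_pos hq2]

/-- `q * (2q - c)^(-q/(q-1)) → 1/2` as `q → ∞`. -/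
lemma aux_lim_half (c : ℝ) :
    Tendsto (fun q : ℝ => q * (2*q - c) ^ (-q/(q-1))) atTop (nhds (1/2)) := by
  have hfrac : Tendsto (fun q : ℝ => q / (2*q - c)) atTop (nhds (1/2)) := by
    have hden : Tendsto (fun q : ℝ => 2 - c/q) atTop (nhds 2) := by
      simpa using (tendsto_const_nhds (x := (2:ℝ))).sub
        ((tendsto_const_nhds (x := c)).div_atTop tendsto_id)
    have h := (tendsto_const_nhds (x := (1:ℝ))).div hden two_ne_zero
    refine Tendsto.congr' ?_ h
    filter_upwards [eventually_gt_atTop (max 1 c)] with q hq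
    have hq1 : 1 < q := lt_of_le_of_lt (le_max_left _ _) hq
    have hq0 : q ≠ 0 := by positivity
    have h2 : 2*q - c ≠ 0 := by
      have : c < q := lt_of_le_of_lt (le_max_right _ _) hq
      nlinarith
    simp only [Pi.div_apply]
    field_simp
  have h := hfrac.mul (aux_lim_one c)
  rw [mul_one] at h
  refine Tendsto.congr' ?_ h
  filter_upwards [eventually_gt_atTop (max 1 c)] with q hq
  have hq1 : 1 < q := lt_of_le_of_lt (le_max_left _ _) hq
  have hc : c < q := lt_of_le_of_lt (le_max_right _ _) hq
  have hq2 : (0:ℝ) < 2*q - c := by nlinarith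
  have h1 : q - 1 ≠ 0 := by linarith
  have he : -q/(q-1) = -1 + (-1/(q-1)) := by field_simp; ring
  rw [he, Real.rpow_add hq2, Real.rpow_neg_one]
  field_simp
lemma aux_bounds (q b : ℝ) (hq : 2 ≤ q) (hb0 : 0 < b) (hb2 : b < 1/2)
    (heq : 2*(1 - 1/q)*b + (1/q)*b ^ ((1-q)/q) - 2 + 1/q = 0) :
    (2*q - 1) ^ (-q/(q-1)) ≤ b ∧ b ≤ (2*q - 3) ^ (-q/(q-1)) := by
  have hq1 : (1:ℝ) < q := by linarith
  have hq0 : q ≠ 0 := by positivity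
  have h1 : q - 1 ≠ 0 := by intro h; linarith [sub_eq_zero.mp h]
  have h1' : (1:ℝ) - q ≠ 0 := by intro h; nlinarith [sub_eq_zero.mp h]
  -- rewrite the equation
  have key : b ^ ((1-q)/q) = 2*q - 1 - 2*(q-1)*b := by
    have h := congrArg (fun x => q * x) heq
    simp only [mul_zero] at h
    field_simp at h
    nlinarith [h]
  set R : ℝ := 2*q - 1 - 2*(q-1)*b with hR
  have hRq : q ≤ R := by nlinarith
  have hR1 : R ≤ 2*q - 1 := by nlinarith
  have hRpos : 0 < R := by linarith
  have hbeq : b = R ^ (-q/(q-1)) := by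
    have h2 : ((1-q)/q) * (-q/(q-1)) = 1 := by field_simp; ring
    calc b = b ^ ((1:ℝ)) := (Real.rpow_one b).symm
    _ = b ^ (((1-q)/q) * (-q/(q-1))) := by rw [h2]
    _ = (b ^ ((1-q)/q)) ^ (-q/(q-1)) := Real.rpow_mul hb0.le _ _
    _ = R ^ (-q/(q-1)) := by rw [key]
  have hexp : -q/(q-1) ≤ 0 := by
    apply div_nonpos_of_nonpos_of_nonneg <;> linarith
  have hlow : (2*q - 1) ^ (-q/(q-1)) ≤ b := by
    rw [hbeq]; exact Real.rpow_le_rpow_of_nonpos hRpos hR1 hexp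
  -- crude bound b ≤ 1/q
  have hbq : b ≤ 1/q := by
    have h3 : b ≤ q ^ (-q/(q-1)) := by
      rw [hbeq]
      exact Real.rpow_le_rpow_of_nonpos (by linarith) hRq hexp
    have h4 : q ^ (-q/(q-1)) ≤ q ^ (-1:ℝ) := by
      apply Real.rpow_le_rpow_of_exponent_le (by linarith)
      rw [neg_div, neg_le_neg_iff, le_div_iff₀ (by linarith)]
      linarith
    rw [Real.rpow_neg_one] at h4
    calc b ≤ _ := h3
    _ ≤ q⁻¹ := h4
    _ = 1/q := (one_div q).symm
  have hqb : q * b ≤ 1 := by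
    rw [le_div_iff₀ (by linarith)] at hbq; linarith [hbq]
  have hR3 : 2*q - 3 ≤ R := by nlinarith
  refine ⟨hlow, ?_⟩
  rw [hbeq]
  exact Real.rpow_le_rpow_of_nonpos (by linarith) hR3 hexp


/-- As q → ∞, the solution a*(q) of the optimality equation satisfies q·a*(q) → 1/2,
δ* → 2, and λ* → 1/3. -/
theorem stmt11 (a : ℝ → ℝ)
    (ha : ∀ q : ℝ, 1 < q → a q ∈ Set.Ioo (0:ℝ) (1/2) ∧
      2*(1 - 1/q)*(a q) + (1/q)*(a q) ^ ((1-q)/q) - 2 + 1/q = 0) :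
    Filter.Tendsto (fun q => q * a q) Filter.atTop (nhds (1/2)) ∧
    Filter.Tendsto (fun q => ((a q) ^ (1/q) + 1 - 2*(a q)) / (1 - a q) ^ (1/q))
      Filter.atTop (nhds 2) ∧
    Filter.Tendsto (fun q =>
        (1 + (((a q) ^ (1/q) + 1 - 2*(a q)) / (1 - a q) ^ (1/q)) ^ (q/(q-1)))
          ^ (-(q-1)/q))
      Filter.atTop (nhds (1/3)) := by
  have hb : ∀ᶠ q : ℝ in atTop,
      (2*q - 1) ^ (-q/(q-1)) ≤ a q ∧ a q ≤ (2*q - 3) ^ (-q/(q-1)) := by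
    filter_upwards [eventually_ge_atTop (2:ℝ)] with q hq
    obtain ⟨⟨h0, h2⟩, heq⟩ := ha q (by linarith)
    exact aux_bounds q (a q) hq h0 h2 heq
  have h1q0 : Tendsto (fun q : ℝ => 1/q) atTop (nhds 0) := by
    simpa [one_div] using (tendsto_inv_atTop_zero (𝕜 := ℝ))
  -- first limit
  have hqa : Tendsto (fun q : ℝ => q * a q) atTop (nhds (1/2)) := by
    refine tendsto_of_tendsto_of_tendsto_of_le_of_le' (aux_lim_half 1) (aux_lim_half 3) ?_ ?_
    · filter_upwards [hb, eventually_ge_atTop (0:ℝ)] with q h hq0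
      exact mul_le_mul_of_nonneg_left h.1 hq0
    · filter_upwards [hb, eventually_ge_atTop (0:ℝ)] with q h hq0
      exact mul_le_mul_of_nonneg_left h.2 hq0
  have ha0 : Tendsto a atTop (nhds 0) := by
    have h := hqa.mul (tendsto_inv_atTop_zero (𝕜 := ℝ))
    rw [mul_zero] at h
    refine Tendsto.congr' ?_ h
    filter_upwards [eventually_gt_atTop (0:ℝ)] with q hq
    have : q ≠ 0 := ne_of_gt hq
    field_simp
  -- a q ^ (1/q) → 1
  have hpow : Tendsto (fun q : ℝ => (a q) ^ (1/q)) atTop (nhds 1) := by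
    refine tendsto_of_tendsto_of_tendsto_of_le_of_le' (aux_lim_one 1) (aux_lim_one 3) ?_ ?_
    · filter_upwards [hb, eventually_ge_atTop (2:ℝ)] with q h hq
      have hq0 : q ≠ 0 := by positivity
      have h1 : q - 1 ≠ 0 := by intro h'; nlinarith [sub_eq_zero.mp h']
      have hbase : (0:ℝ) ≤ 2*q - 1 := by linarith
      have heq : ((2*q - 1) ^ (-q/(q-1))) ^ (1/q) = (2*q - 1) ^ (-1/(q-1)) := by
        rw [← Real.rpow_mul hbase]
        congr 1
        field_simp
      rw [← heq]
      exact Real.rpow_le_rpow (Real.rpow_nonneg hbase _) h.1 (by positivity)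
    · filter_upwards [hb, eventually_ge_atTop (2:ℝ)] with q h hq
      have hq0 : q ≠ 0 := by positivity
      have h1 : q - 1 ≠ 0 := by intro h'; nlinarith [sub_eq_zero.mp h']
      have hbase : (0:ℝ) ≤ 2*q - 3 := by linarith
      have heq : ((2*q - 3) ^ (-q/(q-1))) ^ (1/q) = (2*q - 3) ^ (-1/(q-1)) := by
        rw [← Real.rpow_mul hbase]
        congr 1
        field_simp
      rw [← heq]
      have h0 : (0:ℝ) ≤ a q := (ha q (by linarith)).1.1.le
      exact Real.rpow_le_rpow h0 h.2 (by positivity)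
  -- (1 - a q) ^ (1/q) → 1
  have h1m : Tendsto (fun q : ℝ => (1 - a q) ^ (1/q)) atTop (nhds 1) := by
    have hlow : Tendsto (fun q : ℝ => ((1:ℝ)/2) ^ (1/q)) atTop (nhds 1) := by
      have := (tendsto_const_nhds (x := (1/2:ℝ))).rpow h1q0 (Or.inl (by norm_num))
      simpa using this
    refine tendsto_of_tendsto_of_tendsto_of_le_of_le' hlow tendsto_const_nhds ?_ ?_
    · filter_upwards [eventually_gt_atTop (1:ℝ)] with q hq
      have h2 := (ha q hq).1.2
      exact Real.rpow_le_rpow (by norm_num) (by linarith) (by positivity)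
    · filter_upwards [eventually_gt_atTop (1:ℝ)] with q hq
      have h0 := (ha q hq).1.1
      have h2 := (ha q hq).1.2
      exact Real.rpow_le_one (by linarith) (by linarith) (by positivity)
  -- delta
  have hδ : Tendsto (fun q : ℝ => ((a q) ^ (1/q) + 1 - 2*(a q)) / (1 - a q) ^ (1/q))
      atTop (nhds 2) := by
    have hnum : Tendsto (fun q : ℝ => (a q) ^ (1/q) + 1 - 2*(a q)) atTop (nhds 2) := by
      have h := (hpow.add (tendsto_const_nhds (x := (1:ℝ)))).sub (ha0.const_mul 2)
      have e : (1 + 1 - 2*0 : ℝ) = 2 := by norm_num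
      rwa [e] at h
    have := hnum.div h1m one_ne_zero
    rw [div_one] at this
    exact this
  refine ⟨hqa, hδ, ?_⟩
  -- exponents
  have hexp1 : Tendsto (fun q : ℝ => q/(q-1)) atTop (nhds 1) := by
    have h : Tendsto (fun q : ℝ => 1 + 1/(q-1)) atTop (nhds 1) := by
      have h2 : Tendsto (fun q : ℝ => 1/(q-1)) atTop (nhds 0) :=
        (tendsto_const_nhds (x := (1:ℝ))).div_atTop
          (tendsto_atTop_add_const_right atTop (-1) tendsto_id)
      simpa using (tendsto_const_nhds (x := (1:ℝ))).add h2
    refine Tendsto.congr' ?_ h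
    filter_upwards [eventually_gt_atTop (1:ℝ)] with q hq
    have h1 : q - 1 ≠ 0 := by intro h'; nlinarith [sub_eq_zero.mp h']
    field_simp
    ring
  have hexp2 : Tendsto (fun q : ℝ => -(q-1)/q) atTop (nhds (-1)) := by
    have h : Tendsto (fun q : ℝ => -1 + 1/q) atTop (nhds (-1)) := by
      simpa using (tendsto_const_nhds (x := (-1:ℝ))).add h1q0
    refine Tendsto.congr' ?_ h
    filter_upwards [eventually_gt_atTop (0:ℝ)] with q hq
    have : q ≠ 0 := ne_of_gt hq
    field_simp
    ring
  have hp2 : Tendsto (fun q : ℝ =>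
      (((a q) ^ (1/q) + 1 - 2*(a q)) / (1 - a q) ^ (1/q)) ^ (q/(q-1))) atTop (nhds 2) := by
    have := hδ.rpow hexp1 (Or.inl two_ne_zero)
    rwa [Real.rpow_one] at this
  have h3 : Tendsto (fun q : ℝ =>
      1 + (((a q) ^ (1/q) + 1 - 2*(a q)) / (1 - a q) ^ (1/q)) ^ (q/(q-1))) atTop (nhds 3) := by
    have h := (tendsto_const_nhds (x := (1:ℝ))).add hp2
    have e : (1 + 2 : ℝ) = 3 := by norm_num
    rwa [e] at h
  have := h3.rpow hexp2 (Or.inl three_ne_zero)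
  rwa [show ((3:ℝ) ^ (-1:ℝ)) = 1/3 by rw [Real.rpow_neg_one]; norm_num] at this
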